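/- Let I ⊆ ℝ be an open interval containing 0 and let u, v : I → ℝ be differentiable functions with u(0) = v(0) = 1 such that for all t ∈ I one has 0 < u(t) < 2^{1/3}, v(t) > 0, and u'(t) = (2/3)·(2 − u(t)³)/(u(t)³ v(t)³), v'(t) = −(2/3)·(1 − 2u(t)³)/(u(t)⁴ v(t)²). Then for all t ∈ I, v(t) = 1/√(u(t)·(2 − u(t)³)), i.e. the solution lies on the trajectory v = (u(2 − u³))^{−1/2}. -/

import Mathlib

/-- For the planar system u' = (2/3)(2−u³)/(u³v³),
v' = −(2/3)(1−2u³)/(u⁴v²) on an open interval `I` containing `0`, with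
u(0) = v(0) = 1 and 0 < u < 2^{1/3}, v > 0 on `I`, the solution lies on the
trajectory v = (u(2−u³))^{−1/2}. -/
theorem trajectory_of_system
    (I : Set ℝ) (hIopen : IsOpen I) (hIconn : I.OrdConnected) (h0I : (0 : ℝ) ∈ I)
    (u v : ℝ → ℝ)
    (hu0 : u 0 = 1) (hv0 : v 0 = 1)
    (hu_pos : ∀ t ∈ I, 0 < u t)
    (hu_lt : ∀ t ∈ I, u t < (2 : ℝ) ^ ((1 : ℝ) / 3))
    (hv_pos : ∀ t ∈ I, 0 < v t)
    (hu' : ∀ t ∈ I, HasDerivAt u ((2 / 3) * (2 - u t ^ 3) / (u t ^ 3 * v t ^ 3)) t)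
    (hv' : ∀ t ∈ I, HasDerivAt v (-(2 / 3) * (1 - 2 * u t ^ 3) / (u t ^ 4 * v t ^ 2)) t) :
    ∀ t ∈ I, v t = 1 / Real.sqrt (u t * (2 - u t ^ 3)) := by
  set F : ℝ → ℝ := fun t => v t ^ 2 * (u t * (2 - u t ^ 3)) with hF
  have hcube : ∀ t ∈ I, u t ^ 3 < 2 := by
    intro t ht
    have h := pow_lt_pow_left₀ (hu_lt t ht) (hu_pos t ht).le (n := 3) (by norm_num)
    calc u t ^ 3 < ((2:ℝ) ^ ((1:ℝ)/3)) ^ 3 := h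
      _ = 2 := by
        rw [← Real.rpow_natCast ((2:ℝ) ^ ((1:ℝ)/3)) 3, ← Real.rpow_mul (by norm_num)]
        norm_num
  have hFd : ∀ t ∈ I, HasDerivAt F 0 t := by
    intro t ht
    have hu1 := hu' t ht
    have hv1 := hv' t ht
    have hun : u t ≠ 0 := (hu_pos t ht).ne'
    have hvn : v t ≠ 0 := (hv_pos t ht).ne'
    have h := ((hv1.pow 2).mul (hu1.mul ((hasDerivAt_const t (2:ℝ)).sub (hu1.pow 3))))
    refine HasDerivAt.congr_deriv h ?_
    simp only [Pi.mul_apply, Pi.sub_apply, Pi.pow_apply]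
    field_simp
    ring
  have hconv : Convex ℝ I := convex_iff_ordConnected.mpr hIconn
  have hFconst : ∀ t ∈ I, F t = 1 := by
    intro t ht
    have : F t = F 0 := by
      apply hconv.is_const_of_fderivWithin_eq_zero
        (fun s hs => ((hFd s hs).differentiableAt.differentiableWithinAt)) _ ht h0I
      intro s hs
      rw [fderivWithin_of_isOpen hIopen hs]
      rw [(hFd s hs).hasFDerivAt.fderiv]
      ext; simp
    rw [this, hF]
    simp [hu0, hv0]
    norm_num
  intro t ht
  have hX : 0 < u t * (2 - u t ^ 3) :=
    mul_pos (hu_pos t ht) (by linarith [hcube t ht])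
  have hvpos := hv_pos t ht
  have key : u t * (2 - u t ^ 3) = (1 / v t) ^ 2 := by
    have h1 := hFconst t ht
    rw [div_pow, one_pow, eq_div_iff (pow_ne_zero 2 hvpos.ne')]
    linear_combination h1
  rw [key, Real.sqrt_sq (by positivity)]
  field_simp
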